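/- arXiv:1804.05213 — 2 statements merged into one kernel-verified Lean document; each statement's English description precedes it below -/
import Mathlib

section
/- Define s : ℤ^r × ℤ^r → G by s(η,μ) = η̂ · μ̂ · ((η+μ)^)^{-1}. Then s takes values in the cyclic subgroup generated by c, and s is bimultiplicative: s(η₁+η₂, μ) = s(η₁,μ)·s(η₂,μ) and s(η, μ₁+μ₂) = s(η,μ₁)·s(η,μ₂) for all η, η₁, η₂, μ, μ₁, μ₂ ∈ ℤ^r. -/
open Finset

/-- The lift `η̂ = β̂₁^{n₁} ⋯ β̂_r^{n_r}` of a lattice element `η = (n₁,…,n_r) ∈ ℤ^r`. -/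
noncomputable def latticeLift {G : Type*} [Group G] {r : ℕ} (β : Fin r → G)
    (η : Fin r → ℤ) : G :=
  ((List.finRange r).map (fun i => β i ^ η i)).prod

/-- The map `s(η,μ) = η̂ · μ̂ · ((η+μ)^)⁻¹`. -/
noncomputable def cocycleS {G : Type*} [Group G] {r : ℕ} (β : Fin r → G)
    (η μ : Fin r → ℤ) : G :=
  latticeLift β η * latticeLift β μ * (latticeLift β (η + μ))⁻¹

lemma sum_map_add' {α : Type*} (l : List α) (f g : α → ℤ) :
    (l.map fun i => f i + g i).sum = (l.map f).sum + (l.map g).sum := by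
  induction l with
  | nil => simp
  | cons a t ih => simp only [List.map_cons, List.sum_cons, ih]; ring

/-- Auxiliary bilinear exponent, defined by recursion on a list of indices. -/
def auxE {r : ℕ} (M : Fin r → Fin r → ℤ) : List (Fin r) → (Fin r → ℤ) → (Fin r → ℤ) → ℤ
  | [], _, _ => 0
  | j :: t, η, μ => -(μ j * (t.map fun i => M j i * η i).sum) + auxE M t η μ

lemma auxE_add_left {r : ℕ} (M : Fin r → Fin r → ℤ) (l : List (Fin r))
    (η₁ η₂ μ : Fin r → ℤ) :
    auxE M l (η₁ + η₂) μ = auxE M l η₁ μ + auxE M l η₂ μ := by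
  induction l with
  | nil => simp [auxE]
  | cons j t ih =>
    simp only [auxE, ih, Pi.add_apply]
    have hsum : (t.map fun i => M j i * (η₁ i + η₂ i)).sum
        = (t.map fun i => M j i * η₁ i).sum + (t.map fun i => M j i * η₂ i).sum := by
      rw [← sum_map_add']
      congr 1
      exact List.map_congr_left fun i _ => by ring
    rw [hsum]; ring

lemma auxE_add_right {r : ℕ} (M : Fin r → Fin r → ℤ) (l : List (Fin r))
    (η μ₁ μ₂ : Fin r → ℤ) :
    auxE M l η (μ₁ + μ₂) = auxE M l η μ₁ + auxE M l η μ₂ := by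
  induction l with
  | nil => simp [auxE]
  | cons j t ih =>
    simp only [auxE, ih, Pi.add_apply]
    ring

/-- If `a * b = z * (b * a)` with `z` central, then
`a ^ m * b ^ n = z ^ (m * n) * (b ^ n * a ^ m)`. -/
lemma zpow_zpow_comm_aux {G : Type*} [Group G] (z a b : G)
    (hz : ∀ g : G, z * g = g * z) (h : a * b = z * (b * a)) (m n : ℤ) :
    a ^ m * b ^ n = z ^ (m * n) * (b ^ n * a ^ m) := by
  have hzb : Commute z b := hz b
  have hza : Commute z a := hz a
  have hab : SemiconjBy a b (z * b) := by
    unfold SemiconjBy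
    rw [h, mul_assoc]
  have h1 : ∀ k : ℤ, a * b ^ k = z ^ k * (b ^ k * a) := by
    intro k
    have := (hab.zpow_right k)
    unfold SemiconjBy at this
    rw [this, hzb.mul_zpow, mul_assoc]
  -- b ^ n * a = (z ^ (-n) * a) * b ^ n
  have h2 : SemiconjBy (b ^ n) a (z ^ (-n) * a) := by
    unfold SemiconjBy
    rw [mul_assoc, h1 n, ← mul_assoc, ← zpow_add, neg_add_cancel, zpow_zero, one_mul]
  have h3 := h2.zpow_right m
  unfold SemiconjBy at h3
  have hcomm : Commute (z ^ (-n)) a := hza.zpow_left (-n)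
  rw [hcomm.mul_zpow, ← zpow_mul] at h3
  -- h3 : b ^ n * a ^ m = z ^ (-n * m) * a ^ m * b ^ n
  rw [h3, ← mul_assoc, ← mul_assoc, ← zpow_add]
  have : m * n + -n * m = 0 := by ring
  rw [this, zpow_zero, one_mul]

section Main

variable {G : Type*} [Group G] {r : ℕ} (c : G) (M : Fin r → Fin r → ℤ) (β : Fin r → G)

/-- Moving a single power past a partial lift. -/
lemma single_pow_mul_liftList
    (hc : ∀ g : G, c * g = g * c)
    (hβc : ∀ i j, β i * β j = c ^ (M i j) * (β j * β i))
    (l : List (Fin r)) (η : Fin r → ℤ) (j : Fin r) (m : ℤ) :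
    β j ^ m * (l.map fun i => β i ^ η i).prod
      = c ^ (m * (l.map fun i => M j i * η i).sum)
        * ((l.map fun i => β i ^ η i).prod * β j ^ m) := by
  have hck : ∀ (k : ℤ) (g : G), c ^ k * g = g * c ^ k := by
    intro k g
    have h : Commute c g := hc g
    exact h.zpow_left k
  induction l with
  | nil => simp
  | cons a t ih =>
    have hstep : β j ^ m * β a ^ η a
        = (c ^ (M j a)) ^ (m * η a) * (β a ^ η a * β j ^ m) :=
      zpow_zpow_comm_aux (c ^ (M j a)) (β j) (β a)
        (hck (M j a)) (hβc j a) m (η a)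
    rw [← zpow_mul] at hstep
    simp only [List.map_cons, List.prod_cons, List.sum_cons]
    set P := (t.map fun i => β i ^ η i).prod with hP
    set S := m * (t.map fun i => M j i * η i).sum with hS
    calc β j ^ m * (β a ^ η a * P)
        = (β j ^ m * β a ^ η a) * P := by rw [mul_assoc]
      _ = c ^ (M j a * (m * η a)) * (β a ^ η a * (β j ^ m * P)) := by
          rw [hstep]; simp only [mul_assoc]
      _ = c ^ (M j a * (m * η a)) * (β a ^ η a * (c ^ S * (P * β j ^ m))) := by rw [ih]
      _ = c ^ (m * (M j a * η a + (t.map fun i => M j i * η i).sum))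
            * (β a ^ η a * P * β j ^ m) := by
          rw [show β a ^ η a * (c ^ S * (P * β j ^ m))
              = c ^ S * (β a ^ η a * (P * β j ^ m)) by
            rw [← mul_assoc, ← hck S (β a ^ η a), mul_assoc]]
          rw [← mul_assoc, ← zpow_add]
          rw [show M j a * (m * η a) + S
              = m * (M j a * η a + (t.map fun i => M j i * η i).sum) by
            rw [hS]; ring]
          simp only [mul_assoc]

/-- Merging two partial lifts. -/
lemma liftList_mul_liftList
    (hc : ∀ g : G, c * g = g * c)
    (hβc : ∀ i j, β i * β j = c ^ (M i j) * (β j * β i))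
    (l : List (Fin r)) (η μ : Fin r → ℤ) :
    (l.map fun i => β i ^ η i).prod * (l.map fun i => β i ^ μ i).prod
      = c ^ (auxE M l η μ) * (l.map fun i => β i ^ (η + μ) i).prod := by
  have hck : ∀ (k : ℤ) (g : G), c ^ k * g = g * c ^ k := by
    intro k g
    have h : Commute c g := hc g
    exact h.zpow_left k
  induction l with
  | nil => simp [auxE]
  | cons j t ih =>
    simp only [List.map_cons, List.prod_cons, auxE]
    set P := (t.map fun i => β i ^ η i).prod with hP
    set Q := (t.map fun i => β i ^ μ i).prod with hQ
    set R := (t.map fun i => β i ^ (η + μ) i).prod with hR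
    set S := μ j * (t.map fun i => M j i * η i).sum with hS
    have hmove : β j ^ μ j * P = c ^ S * (P * β j ^ μ j) :=
      single_pow_mul_liftList c M β hc hβc t η j (μ j)
    have hmove' : P * β j ^ μ j = c ^ (-S) * (β j ^ μ j * P) := by
      rw [hmove, ← mul_assoc, ← zpow_add, neg_add_cancel, zpow_zero, one_mul]
    calc β j ^ η j * P * (β j ^ μ j * Q)
        = β j ^ η j * (P * β j ^ μ j) * Q := by simp only [mul_assoc]
      _ = β j ^ η j * (c ^ (-S) * (β j ^ μ j * P)) * Q := by rw [hmove']
      _ = c ^ (-S) * (β j ^ η j * β j ^ μ j * (P * Q)) := by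
          rw [show β j ^ η j * (c ^ (-S) * (β j ^ μ j * P))
              = c ^ (-S) * (β j ^ η j * (β j ^ μ j * P)) by
            rw [← mul_assoc, ← hck (-S) (β j ^ η j), mul_assoc]]
          simp only [mul_assoc]
      _ = c ^ (-S) * (β j ^ (η + μ) j * (c ^ (auxE M t η μ) * R)) := by
          rw [ih, ← zpow_add, Pi.add_apply]
      _ = c ^ (-S + auxE M t η μ) * (β j ^ (η + μ) j * R) := by
          rw [show β j ^ (η + μ) j * (c ^ (auxE M t η μ) * R)
              = c ^ (auxE M t η μ) * (β j ^ (η + μ) j * R) by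
            rw [← mul_assoc, ← hck (auxE M t η μ) (β j ^ (η + μ) j), mul_assoc]]
          rw [← mul_assoc, ← zpow_add]

end Main

/-- The map `s(η,μ) = η̂ · μ̂ · ((η+μ)^)⁻¹` takes values in the cyclic subgroup generated by `c`,
and is bimultiplicative in both arguments. -/
theorem cocycleS_mem_zpowers_and_bimul {G : Type*} [Group G] {r : ℕ} (hr : 1 ≤ r)
    (c : G) (hc : ∀ g : G, c * g = g * c) (hc2 : c ^ 2 = 1)
    (M : Fin r → Fin r → ℤ) (hM : ∀ i j, M i j = M j i)
    (β : Fin r → G)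
    (hβ : ∀ i j, β i * β j * (β i)⁻¹ * (β j)⁻¹ = c ^ (M i j)) :
    (∀ η μ : Fin r → ℤ, cocycleS β η μ ∈ Subgroup.zpowers c) ∧
    (∀ η₁ η₂ μ : Fin r → ℤ,
      cocycleS β (η₁ + η₂) μ = cocycleS β η₁ μ * cocycleS β η₂ μ) ∧
    (∀ η μ₁ μ₂ : Fin r → ℤ,
      cocycleS β η (μ₁ + μ₂) = cocycleS β η μ₁ * cocycleS β η μ₂) := by
  have hβc : ∀ i j, β i * β j = c ^ (M i j) * (β j * β i) := by
    intro i j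
    have h := hβ i j
    have : β i * β j = c ^ (M i j) * (β j * β i) := by
      rw [← h]; group
    exact this
  have key : ∀ η μ : Fin r → ℤ,
      cocycleS β η μ = c ^ (auxE M (List.finRange r) η μ) := by
    intro η μ
    unfold cocycleS latticeLift
    rw [liftList_mul_liftList c M β hc hβc (List.finRange r) η μ]
    rw [mul_assoc, mul_inv_cancel, mul_one]
  refine ⟨fun η μ => ?_, fun η₁ η₂ μ => ?_, fun η μ₁ μ₂ => ?_⟩
  · rw [key]
    exact Subgroup.zpow_mem _ (Subgroup.mem_zpowers c) _
  · rw [key, key, key, auxE_add_left, zpow_add]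
  · rw [key, key, key, auxE_add_right, zpow_add]
end

section
/- For η ∈ ℤ^r set η_ε = (1/2)·B^{-1}εη ∈ ℝ^r (B is invertible since it is positive definite). Then the map Ψ : T⋉Π^bas → T⋉Π^triv defined by Ψ(t,η,z) = (t + [η_ε], η, z) is a group isomorphism. In particular the groups T⋉Π^bas and T⋉Π^triv are (non-canonically) isomorphic. -/
open Finset

/-- The torus `T = ℝ^r/ℤ^r`. -/
abbrev Torus (r : ℕ) := Fin r → AddCircle (1 : ℝ)

/-- `κ_η(t) = exp(−2πi·xᵀBη)` for `t = [x] ∈ T = ℝ^r/ℤ^r` and `η ∈ ℤ^r`, well defined since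
`B` has integer entries. -/
noncomputable def kappaChar {r : ℕ} (B : Matrix (Fin r) (Fin r) ℤ)
    (η : Fin r → ℤ) (t : Torus r) : Circle :=
  ∏ i, AddCircle.toCircle ((-(∑ j, B i j * η j)) • t i)

/-- The underlying set `T × ℤ^r × 𝕋` of the groups `T⋉Π^bas` and `T⋉Π^triv`. -/
abbrev TPi (r : ℕ) := Torus r × (Fin r → ℤ) × Circle

/-- The multiplication `(t₁,η₁,z₁)·(t₂,η₂,z₂) = (t₁+t₂, η₁+η₂, κ_{η₁}(t₂)·σ(η₁,η₂)·z₁z₂)`. -/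
noncomputable def tpiMul {r : ℕ} (B : Matrix (Fin r) (Fin r) ℤ)
    (σ : (Fin r → ℤ) → (Fin r → ℤ) → Circle) (p q : TPi r) : TPi r :=
  (p.1 + q.1, p.2.1 + q.2.1, kappaChar B p.2.1 q.1 * σ p.2.1 q.2.1 * (p.2.2 * q.2.2))

/-- The element `−1` of the circle group. -/
noncomputable def negOneCircle : Circle := ⟨-1, by norm_num [Submonoid.unitSphere]⟩

/-- The `off-diagonal` matrix `ε` with `ε_{ij} = B_{ij}` for `i > j`, and `0` for `i ≤ j`. -/
def epsMatrix {r : ℕ} (B : Matrix (Fin r) (Fin r) ℤ) : Matrix (Fin r) (Fin r) ℤ :=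
  fun i j => if j < i then B i j else 0

/-- The sign cocycle `σ_B(η₁,η₂) = (−1)^{η₁ᵀεη₂}`. -/
noncomputable def sigmaB {r : ℕ} (B : Matrix (Fin r) (Fin r) ℤ)
    (η₁ η₂ : Fin r → ℤ) : Circle :=
  negOneCircle ^ (∑ i, ∑ j, η₁ i * epsMatrix B i j * η₂ j)

/-- `η_ε = (1/2)·B⁻¹εη ∈ ℝ^r`. -/
noncomputable def etaEps {r : ℕ} (B : Matrix (Fin r) (Fin r) ℤ) (η : Fin r → ℤ) :
    Fin r → ℝ :=
  (2 : ℝ)⁻¹ • ((B.map ((↑) : ℤ → ℝ))⁻¹.mulVec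
    (((epsMatrix B).map ((↑) : ℤ → ℝ)).mulVec (fun i => (η i : ℝ))))

/-- The map `Ψ(t,η,z) = (t + [η_ε], η, z)`. -/
noncomputable def psiMap {r : ℕ} (B : Matrix (Fin r) (Fin r) ℤ) (p : TPi r) : TPi r :=
  (p.1 + fun i => ((etaEps B p.2.1 i : ℝ) : AddCircle (1 : ℝ)), p.2.1, p.2.2)


section Aux

open AddCircle Matrix

lemma coe_zsmul_addCircle (n : ℤ) (x : ℝ) :
    n • ((x : ℝ) : AddCircle (1:ℝ)) = (((n : ℝ) * x : ℝ) : AddCircle (1:ℝ)) := by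
  rw [← QuotientAddGroup.mk_zsmul]
  congr 1
  exact zsmul_eq_mul x n

lemma prod_toCircle {ι : Type*} (s : Finset ι) (f : ι → AddCircle (1:ℝ)) :
    ∏ i ∈ s, AddCircle.toCircle (f i) = AddCircle.toCircle (∑ i ∈ s, f i) := by
  induction s using Finset.cons_induction with
  | empty => simp
  | cons a s ha ih => simp [Finset.prod_cons, Finset.sum_cons, ih, AddCircle.toCircle_add]

lemma toCircle_neg_half_int (m : ℤ) :
    AddCircle.toCircle (((-(m:ℝ)/2 : ℝ) : AddCircle (1:ℝ))) = negOneCircle ^ m := by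
  rw [AddCircle.toCircle_apply_mk]
  apply Subtype.ext
  have h1 : (2 * Real.pi / 1 * (-(m:ℝ)/2)) = (-m : ℤ) * Real.pi := by push_cast; ring
  rw [h1]
  have h2 : (Circle.exp ((-m : ℤ) * Real.pi) : ℂ) = Complex.exp (((-m : ℤ) : ℂ) * (Real.pi * Complex.I)) := by
    rw [Circle.coe_exp]; push_cast; ring_nf
  rw [h2, Complex.exp_int_mul, Complex.exp_pi_mul_I]
  have h3 : ((negOneCircle ^ m : Circle) : ℂ) = ((-1 : ℂ)) ^ m := by
    rw [show ((negOneCircle ^ m : Circle) : ℂ) = Circle.coeHom (negOneCircle ^ m) from rfl,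
      map_zpow]
    rfl
  rw [h3, _root_.zpow_neg, ← _root_.inv_zpow, inv_neg_one]

lemma kappaChar_add {r : ℕ} (B : Matrix (Fin r) (Fin r) ℤ) (η : Fin r → ℤ) (t s : Torus r) :
    kappaChar B η (t + s) = kappaChar B η t * kappaChar B η s := by
  unfold kappaChar
  rw [← Finset.prod_mul_distrib]
  refine Finset.prod_congr rfl fun i _ => ?_
  rw [Pi.add_apply, smul_add, AddCircle.toCircle_add]

lemma kappaChar_coe {r : ℕ} (B : Matrix (Fin r) (Fin r) ℤ) (η : Fin r → ℤ) (x : Fin r → ℝ) :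
    kappaChar B η (fun i => ((x i : ℝ) : AddCircle (1:ℝ)))
      = AddCircle.toCircle ((((∑ i, (-(∑ j, (B i j : ℝ) * (η j : ℝ))) * x i) : ℝ)) : AddCircle (1:ℝ)) := by
  unfold kappaChar
  have h : ∀ i : Fin r, ((-(∑ j, B i j * η j) : ℤ)) • (((x i : ℝ)) : AddCircle (1:ℝ))
      = ((((-(∑ j, (B i j : ℝ) * (η j : ℝ))) * x i : ℝ)) : AddCircle (1:ℝ)) := by
    intro i
    rw [coe_zsmul_addCircle]
    congr 1
    push_cast
    ring
  simp only [h]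
  rw [prod_toCircle]
  congr 1
  rw [← QuotientAddGroup.mk_sum]

lemma etaEps_add {r : ℕ} (B : Matrix (Fin r) (Fin r) ℤ) (η₁ η₂ : Fin r → ℤ) :
    etaEps B (η₁ + η₂) = etaEps B η₁ + etaEps B η₂ := by
  unfold etaEps
  have h : (fun i => (((η₁ + η₂) i : ℤ) : ℝ)) = (fun i => ((η₁ i : ℤ) : ℝ)) + (fun i => ((η₂ i : ℤ) : ℝ)) := by
    funext i; simp only [Pi.add_apply]; push_cast; ring
  rw [h, Matrix.mulVec_add, Matrix.mulVec_add, smul_add]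

lemma key_dot {r : ℕ} (B : Matrix (Fin r) (Fin r) ℤ)
    (hBsymm : B.IsSymm) (hBpos : (B.map ((↑) : ℤ → ℝ)).PosDef) (η₁ η₂ : Fin r → ℤ) :
    ∑ i, (-(∑ j, (B i j : ℝ) * (η₁ j : ℝ))) * etaEps B η₂ i
      = -(((∑ i, ∑ j, η₁ i * epsMatrix B i j * η₂ j : ℤ) : ℝ)) / 2 := by
  set Br := B.map ((↑) : ℤ → ℝ) with hBr
  set εr := (epsMatrix B).map ((↑) : ℤ → ℝ) with hεr
  set u : Fin r → ℝ := fun i => (η₁ i : ℝ) with hu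
  set w : Fin r → ℝ := fun i => (η₂ i : ℝ) with hw
  set y : Fin r → ℝ := Br⁻¹.mulVec (εr.mulVec w) with hy
  have hdet : IsUnit Br.det := isUnit_iff_ne_zero.mpr (ne_of_gt hBpos.det_pos)
  have hsymm : Brᵀ = Br := by
    rw [hBr, ← Matrix.transpose_map]
    unfold Matrix.IsSymm at hBsymm
    rw [hBsymm]
  have hmv : Br.mulVec u = Matrix.vecMul u Br := by
    conv_lhs => rw [← hsymm, Matrix.mulVec_transpose]
  have h2 : dotProduct (Br.mulVec u) y = dotProduct u (εr.mulVec w) := by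
    rw [hmv, ← Matrix.dotProduct_mulVec, hy, Matrix.mulVec_mulVec,
      Matrix.mul_nonsing_inv _ hdet, Matrix.one_mulVec]
  have h3 : ∀ i, etaEps B η₂ i = (2 : ℝ)⁻¹ * y i := fun i => rfl
  have h4 : ∀ i, (∑ j, (B i j : ℝ) * (η₁ j : ℝ)) = Br.mulVec u i := by
    intro i
    simp [Matrix.mulVec, dotProduct, hBr, Matrix.map_apply, hu]
  calc ∑ i, (-(∑ j, (B i j : ℝ) * (η₁ j : ℝ))) * etaEps B η₂ i
      = -((2:ℝ)⁻¹ * dotProduct (Br.mulVec u) y) := by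
        rw [dotProduct, Finset.mul_sum, ← Finset.sum_neg_distrib]
        refine Finset.sum_congr rfl fun i _ => ?_
        rw [h3, h4]; ring
    _ = -((2:ℝ)⁻¹ * dotProduct u (εr.mulVec w)) := by rw [h2]
    _ = -(((∑ i, ∑ j, η₁ i * epsMatrix B i j * η₂ j : ℤ) : ℝ)) / 2 := by
        simp only [dotProduct, Matrix.mulVec, hεr, Matrix.map_apply, hu, hw]
        push_cast
        rw [neg_div, Finset.sum_div, ← Finset.sum_neg_distrib, Finset.mul_sum,
          ← Finset.sum_neg_distrib]
        refine Finset.sum_congr rfl fun i _ => ?_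
        rw [neg_inj, div_eq_inv_mul, Finset.mul_sum, Finset.mul_sum, Finset.mul_sum]
        refine Finset.sum_congr rfl fun j _ => ?_
        ring

end Aux

/-- The map `Ψ : T⋉Π^bas → T⋉Π^triv`, `Ψ(t,η,z) = (t + [η_ε], η, z)`, is a group
isomorphism; in particular the groups `T⋉Π^bas` and `T⋉Π^triv` are (non-canonically)
isomorphic. -/
theorem psiMap_isom {r : ℕ} (hr : 1 ≤ r) (B : Matrix (Fin r) (Fin r) ℤ)
    (hBsymm : B.IsSymm) (hBpos : (B.map ((↑) : ℤ → ℝ)).PosDef) :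
    Function.Bijective (psiMap B) ∧
    (∀ a b : TPi r,
      psiMap B (tpiMul B (sigmaB B) a b)
        = tpiMul B (fun _ _ => (1 : Circle)) (psiMap B a) (psiMap B b)) := by
  constructor
  · refine Function.bijective_iff_has_inverse.mpr
      ⟨fun p => (p.1 - fun i => ((etaEps B p.2.1 i : ℝ) : AddCircle (1:ℝ)), p.2.1, p.2.2),
        fun p => ?_, fun p => ?_⟩
    · simp only [psiMap, add_sub_cancel_right]
    · simp only [psiMap, sub_add_cancel]
  · rintro ⟨t₁, η₁, z₁⟩ ⟨t₂, η₂, z₂⟩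
    simp only [psiMap, tpiMul]
    refine Prod.ext ?_ (Prod.ext rfl ?_)
    · show (t₁ + t₂) + _ = _
      have h : (fun i => ((etaEps B (η₁ + η₂) i : ℝ) : AddCircle (1:ℝ)))
          = (fun i => ((etaEps B η₁ i : ℝ) : AddCircle (1:ℝ)))
            + (fun i => ((etaEps B η₂ i : ℝ) : AddCircle (1:ℝ))) := by
        funext i
        rw [etaEps_add]
        simp only [Pi.add_apply]
        push_cast
        rfl
      rw [h]
      abel
    · show kappaChar B η₁ t₂ * sigmaB B η₁ η₂ * (z₁ * z₂)
        = kappaChar B η₁ (t₂ + fun i => ((etaEps B η₂ i : ℝ) : AddCircle (1:ℝ))) * 1 * (z₁ * z₂)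
      rw [kappaChar_add, kappaChar_coe, key_dot B hBsymm hBpos, mul_one]
      rw [toCircle_neg_half_int]
      rfl
end
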